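/- arXiv:2105.13207 — 10 statements merged into one kernel-verified Lean document; each statement's English description precedes it below -/
import Mathlib

section
/- Let G be the Klein four-group with generators σ₁, σ₂ acting on a multiplicatively-written F₂[G]-module W. If M and N are submodules of W, then M ∩ N = {1} if and only if M^G ∩ N^G = {1}, where M^G denotes the submodule of elements fixed by every element of G. -/
/-- For submodules M, N of an F₂[G]-module W (G the Klein four-group with
generators σ₁, σ₂), M ∩ N is trivial iff the intersection of their fixed
submodules is trivial. -/
theorem stmt_0 (W : Type*) [AddCommGroup W] [Module (ZMod 2) W]
    (σ1 σ2 : W →ₗ[ZMod 2] W)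
    (hσ1 : ∀ x, σ1 (σ1 x) = x) (hσ2 : ∀ x, σ2 (σ2 x) = x)
    (hcomm : ∀ x, σ1 (σ2 x) = σ2 (σ1 x))
    (M N : Submodule (ZMod 2) W)
    (hM1 : ∀ x ∈ M, σ1 x ∈ M) (hM2 : ∀ x ∈ M, σ2 x ∈ M)
    (hN1 : ∀ x ∈ N, σ1 x ∈ N) (hN2 : ∀ x ∈ N, σ2 x ∈ N) :
    M ⊓ N = ⊥ ↔ ∀ x, x ∈ M → x ∈ N → σ1 x = x → σ2 x = x → x = 0 := by
  have char2 : ∀ a : W, a + a = 0 := by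
    intro a
    have h := two_smul (ZMod 2) a
    rw [show (2 : ZMod 2) = 0 by decide, zero_smul] at h
    exact h.symm
  have eq_of_add : ∀ a b : W, a + b = 0 → a = b := by
    intro a b h
    have : a + b + b = b := by rw [h]; simp
    rwa [add_assoc, char2, add_zero] at this
  constructor
  · intro h x hxM hxN _ _
    have : x ∈ M ⊓ N := ⟨hxM, hxN⟩
    rw [h] at this
    exact this
  · intro h
    rw [eq_bot_iff]
    rintro x ⟨hxM, hxN⟩
    simp only [Submodule.mem_bot]
    -- y := x + σ1 x is σ1-fixed
    set y := x + σ1 x with hy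
    have hyM : y ∈ M := M.add_mem hxM (hM1 x hxM)
    have hyN : y ∈ N := N.add_mem hxN (hN1 x hxN)
    have hy1 : σ1 y = y := by
      rw [hy, map_add, hσ1, add_comm]
    -- z := y + σ2 y is fixed by both
    have hz1 : σ1 (y + σ2 y) = y + σ2 y := by
      rw [map_add, hy1, hcomm, hy1]
    have hz2 : σ2 (y + σ2 y) = y + σ2 y := by
      rw [map_add, hσ2, add_comm]
    have hz0 : y + σ2 y = 0 :=
      h _ (M.add_mem hyM (hM2 y hyM)) (N.add_mem hyN (hN2 y hyN)) hz1 hz2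
    have hy2 : σ2 y = y := (eq_of_add _ _ hz0).symm
    have hy0 : y = 0 := h y hyM hyN hy1 hy2
    have hx1 : σ1 x = x := (eq_of_add _ _ hy0).symm
    -- w := x + σ2 x
    set w := x + σ2 x with hw
    have hwM : w ∈ M := M.add_mem hxM (hM2 x hxM)
    have hwN : w ∈ N := N.add_mem hxN (hN2 x hxN)
    have hw2 : σ2 w = w := by rw [hw, map_add, hσ2, add_comm]
    have hw1 : σ1 w = w := by rw [hw, map_add, hx1, hcomm, hx1]
    have hw0 : w = 0 := h w hwM hwN hw1 hw2
    have hx2 : σ2 x = x := (eq_of_add _ _ hw0).symm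
    exact h x hxM hxN hx1 hx2
end

section
/- Let F be a field with char F ≠ 2 and a₁, a₂ ∈ F× such that K = F(√a₁, √a₂) is biquadratic over F. If f₁, f₂, f₃, f₄ ∈ F satisfy f₁f₄ = f₂f₃ and g := f₁² − a₁f₂² − a₂f₃² + a₁a₂f₄² ≠ 0, then g is a product of an element of N_{K₁/F}(K₁×) and an element of N_{K₂/F}(K₂×), where K₁ = F(√a₁) and K₂ = F(√a₂). -/
/-- If f₁f₄ = f₂f₃ and g = f₁² − a₁f₂² − a₂f₃² + a₁a₂f₄² ≠ 0, then g is a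
product of a norm from F(√a₁) and a norm from F(√a₂). -/
theorem stmt_3 (F : Type*) [Field F] (hchar : (2 : F) ≠ 0) (a1 a2 : F)
    (ha1 : a1 ≠ 0) (ha2 : a2 ≠ 0)
    (hn1 : ¬ ∃ g : F, a1 = g ^ 2) (hn2 : ¬ ∃ g : F, a2 = g ^ 2)
    (hn3 : ¬ ∃ g : F, a1 * a2 = g ^ 2)
    (f1 f2 f3 f4 : F) (hrel : f1 * f4 = f2 * f3)
    (g : F) (hg : g = f1 ^ 2 - a1 * f2 ^ 2 - a2 * f3 ^ 2 + a1 * a2 * f4 ^ 2)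
    (hg0 : g ≠ 0) :
    ∃ x y z w : F, g = (x ^ 2 - a1 * y ^ 2) * (z ^ 2 - a2 * w ^ 2) := by
  by_cases hd : f1 ^ 2 - a1 * f2 ^ 2 = 0
  · -- then f1 = f2 = 0 since a1 is not a square
    have hf2 : f2 = 0 := by
      by_contra h2
      exact hn1 ⟨f1 / f2, by field_simp; linear_combination -hd⟩
    have hf1 : f1 = 0 := by
      have : f1 ^ 2 = 0 := by rw [hf2] at hd; linear_combination hd
      exact pow_eq_zero_iff (n := 2) (by norm_num) |>.mp this
    exact ⟨f3, f4, 0, 1, by rw [hg, hf1, hf2]; ring⟩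
  · set d := f1 ^ 2 - a1 * f2 ^ 2 with hdd
    set c := f1 * f3 - a1 * f2 * f4 with hcc
    refine ⟨f1 / d, f2 / d, d, c, ?_⟩
    field_simp
    rw [hg, hdd, hcc]
    linear_combination a1*a2*(f1^2 - a1*f2^2)*(f1*f4 - f2*f3) * hrel
end

section
/- Let F be a field of characteristic ≠ 2 and K = F(√a₁, √a₂) biquadratic over F with intermediate field K₃ = F(√(a₁a₂)). Every element of F× ∩ N_{K/K₃}(K×) lies in N_{K₁/F}(K₁×) · N_{K₂/F}(K₂×), where K₁ = F(√a₁) and K₂ = F(√a₂). -/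
theorem key {F : Type*} [Field F] (hchar : (2:F) ≠ 0) (a1 a2 x y z w f : F)
    (ha1 : a1 ≠ 0) (ha2 : a2 ≠ 0) (hf : f ≠ 0)
    (hE : f = x^2 - a1*y^2 - a2*z^2 + a1*a2*w^2) (hR : x*w = y*z) :
    ∃ X Y Z W : F, f = (X ^ 2 - a1 * Y ^ 2) * (Z ^ 2 - a2 * W ^ 2) := by
  by_cases hd : x^2 - a1*y^2 = 0
  · by_cases hd2 : x^2 - a2*z^2 = 0
    · by_cases hy : y = 0
      · have hx : x = 0 := by
          have hx2 : x^2 = 0 := by rw [hy] at hd; linear_combination hd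
          exact pow_eq_zero_iff (n := 2) (by norm_num) |>.mp hx2
        have hz : z = 0 := by
          have : a2 * z^2 = 0 := by rw [hx] at hd2; linear_combination -hd2
          rcases mul_eq_zero.mp this with h | h
          · exact absurd h ha2
          · exact pow_eq_zero_iff (n := 2) (by norm_num) |>.mp h
        exact ⟨0, 1, 0, w, by rw [hE, hx, hy, hz]; ring⟩
      · have hx : x ≠ 0 := by
          intro h
          apply hy
          have h1 : a1 * y^2 = 0 := by rw [h] at hd; linear_combination -hd
          rcases mul_eq_zero.mp h1 with h2 | h2
          · exact absurd h2 ha1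
          · exact pow_eq_zero_iff (n := 2) (by norm_num) |>.mp h2
        refine ⟨(f+1)/2, (1-f)*y/(2*x), 1, 0, ?_⟩
        have hd' : x^2 = a1*y^2 := by linear_combination hd
        field_simp
        linear_combination (-1 + 2*f - f^2) * hd'
    · refine ⟨1, (x*y - a2*z*w)/(x^2 - a2*z^2), x, z, ?_⟩
      have h1 : f * (x^2 - a2*z^2) = (x^2 - a2*z^2)^2 - a1*(x*y - a2*z*w)^2 := by
        linear_combination (x^2 - a2*z^2)*hE + a1*a2*(x*w - y*z)*hR
      field_simp
      linear_combination h1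
  · refine ⟨x, y, 1, (x*z - a1*y*w)/(x^2 - a1*y^2), ?_⟩
    have h1 : f * (x^2 - a1*y^2) = (x^2 - a1*y^2)^2 - a2*(x*z - a1*y*w)^2 := by
      linear_combination (x^2 - a1*y^2)*hE + a1*a2*(x*w - y*z)*hR
    field_simp
    linear_combination h1

/-- Every element of F× that is a norm from K to K₃ = F(√a₁a₂) is a product
of a norm from K₁ = F(√a₁) and a norm from K₂ = F(√a₂). -/
theorem stmt_4 (F K : Type*) [Field F] [Field K] [Algebra F K]
    (hchar : (2 : F) ≠ 0) (a1 a2 : F)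
    (s1 s2 : K) (hs1 : s1 ^ 2 = algebraMap F K a1) (hs2 : s2 ^ 2 = algebraMap F K a2)
    (hli : LinearIndependent F ![(1 : K), s1, s2, s1 * s2])
    (hsp : Submodule.span F ({1, s1, s2, s1 * s2} : Set K) = ⊤)
    (σ : K ≃ₐ[F] K) (hσ1 : σ s1 = -s1) (hσ2 : σ s2 = -s2)
    (f : F) (hf : f ≠ 0)
    (hnorm : ∃ k : K, k ≠ 0 ∧ algebraMap F K f = k * σ k) :
    ∃ x y z w : F, f = (x ^ 2 - a1 * y ^ 2) * (z ^ 2 - a2 * w ^ 2) := by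
  obtain ⟨k, hk0, hk⟩ := hnorm
  -- nonvanishing of a1, a2
  have hs1ne : s1 ≠ 0 := by simpa using hli.ne_zero 1
  have hs2ne : s2 ≠ 0 := by simpa using hli.ne_zero 2
  have ha1 : a1 ≠ 0 := by
    intro h
    apply hs1ne
    have : s1 ^ 2 = 0 := by rw [hs1, h, map_zero]
    exact pow_eq_zero_iff (n := 2) (by norm_num) |>.mp this
  have ha2 : a2 ≠ 0 := by
    intro h
    apply hs2ne
    have : s2 ^ 2 = 0 := by rw [hs2, h, map_zero]
    exact pow_eq_zero_iff (n := 2) (by norm_num) |>.mp this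
  -- coordinates of k
  have hmem : k ∈ Submodule.span F ({1, s1, s2, s1 * s2} : Set K) := by
    rw [hsp]; trivial
  have hrange : ({1, s1, s2, s1 * s2} : Set K) = Set.range ![(1:K), s1, s2, s1 * s2] := by
    ext t
    simp [Matrix.range_cons, Matrix.range_empty]
    tauto
  rw [hrange, Submodule.mem_span_range_iff_exists_fun] at hmem
  obtain ⟨c, hc⟩ := hmem
  set x := c 0 with hx
  set y := c 1 with hy
  set z := c 2 with hz
  set w := c 3 with hw
  have hk' : k = algebraMap F K x + algebraMap F K y * s1 + algebraMap F K z * s2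
      + algebraMap F K w * (s1 * s2) := by
    rw [← hc]
    simp [Fin.sum_univ_four, Algebra.smul_def]
    rfl
  have hσk : σ k = algebraMap F K x - algebraMap F K y * s1 - algebraMap F K z * s2
      + algebraMap F K w * (s1 * s2) := by
    rw [hk']
    simp [map_add, map_mul, hσ1, hσ2, AlgEquiv.commutes]
    ring
  have hprod : algebraMap F K f =
      (algebraMap F K x + algebraMap F K y * s1 + algebraMap F K z * s2
        + algebraMap F K w * (s1 * s2)) *
      (algebraMap F K x - algebraMap F K y * s1 - algebraMap F K z * s2
        + algebraMap F K w * (s1 * s2)) := by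
    rw [hk, ← hk', ← hσk]
  -- linear independence gives the two scalar relations
  rw [Fintype.linearIndependent_iff] at hli
  have hzero := hli ![f - (x^2 - a1*y^2 - a2*z^2 + a1*a2*w^2), 0, 0, 2*(y*z) - 2*(x*w)] ?_
  · have h0 : f - (x^2 - a1*y^2 - a2*z^2 + a1*a2*w^2) = 0 := by simpa using hzero 0
    have h3 : 2*(y*z) - 2*(x*w) = 0 := by simpa using hzero 3
    have hE : f = x^2 - a1*y^2 - a2*z^2 + a1*a2*w^2 := by linear_combination h0
    have hR : x*w = y*z := by
      have h2 : 2*(x*w) = 2*(y*z) := by linear_combination -h3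
      exact mul_left_cancel₀ hchar h2
    exact key hchar a1 a2 x y z w f ha1 ha2 hf hE hR
  · simp only [Fin.sum_univ_four, Matrix.cons_val_zero, Matrix.cons_val_one, Matrix.head_cons,
      Matrix.cons_val_two, Matrix.tail_cons, Matrix.cons_val_three, Algebra.smul_def,
      map_sub, map_add, map_mul, map_pow, map_ofNat, mul_one]
    push_cast
    linear_combination hprod
      + ((algebraMap F K w)^2 * s2^2 - (algebraMap F K y)^2) * hs1
      + ((algebraMap F K w)^2 * (algebraMap F K a1) - (algebraMap F K z)^2) * hs2
end

section
/- Let F be a field of characteristic ≠ 2 and K = F(√a₁, √a₂) biquadratic over F with K₃ = F(√(a₁a₂)). If f ∈ F× and f = N_{K/K₃}(k)·k̂² for some k, k̂ ∈ K×, then there exist k̃ ∈ K× and ε ∈ {0,1} such that f/a₁^ε = N_{K/K₃}(k̃). -/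
/-- If f ∈ F× equals a norm from K to K₃ = F(√a₁a₂) times a square of K,
then f/a₁^ε is a norm from K to K₃ for some ε ∈ {0,1}. -/
theorem stmt_6 (F K : Type*) [Field F] [Field K] [Algebra F K]
    (hchar : (2 : F) ≠ 0) (a1 a2 : F) (ha1 : a1 ≠ 0) (ha2 : a2 ≠ 0)
    (s1 s2 : K) (hs1 : s1 ^ 2 = algebraMap F K a1) (hs2 : s2 ^ 2 = algebraMap F K a2)
    (hli : LinearIndependent F ![(1 : K), s1, s2, s1 * s2])
    (hsp : Submodule.span F ({1, s1, s2, s1 * s2} : Set K) = ⊤)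
    (σ : K ≃ₐ[F] K) (hσ1 : σ s1 = -s1) (hσ2 : σ s2 = -s2)
    (f : F) (hf : f ≠ 0)
    (hnorm : ∃ k khat : K, k ≠ 0 ∧ khat ≠ 0 ∧
      algebraMap F K f = k * σ k * khat ^ 2) :
    ∃ (kt : K) (ε : ℕ), ε ≤ 1 ∧ kt ≠ 0 ∧
      algebraMap F K (f / a1 ^ ε) = kt * σ kt := by
  -- σ is an involution, since it squares to the identity on a spanning set
  have hσσ : ∀ x : K, σ (σ x) = x := by
    have h : (σ.toLinearMap ∘ₗ σ.toLinearMap : K →ₗ[F] K) = LinearMap.id := by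
      apply LinearMap.ext_on hsp
      rintro x hx
      simp only [Set.mem_insert_iff, Set.mem_singleton_iff] at hx
      rcases hx with rfl | rfl | rfl | rfl <;>
        simp [hσ1, hσ2, map_one, map_mul]
    intro x
    exact congrArg (fun g : K →ₗ[F] K => g x) h
  obtain ⟨k, khat, hk, hkh, heq⟩ := hnorm
  have hs1ne : s1 ≠ 0 := by
    intro h
    apply ha1
    have : algebraMap F K a1 = 0 := by rw [← hs1, h]; ring
    exact (map_eq_zero_iff _ (algebraMap F K).injective).mp this
  have hσk : σ k ≠ 0 := fun h => hk (σ.injective (by rw [h, map_zero]))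
  have heq2 : algebraMap F K f = k * σ k * (σ khat) ^ 2 := by
    have := congrArg σ heq
    rw [σ.commutes, map_mul, map_mul, map_pow, hσσ] at this
    rw [this]; ring
  have hsq : khat ^ 2 = (σ khat) ^ 2 := by
    have h := heq.symm.trans heq2
    exact mul_left_cancel₀ (mul_ne_zero hk hσk) h
  have hfac : (khat - σ khat) * (khat + σ khat) = 0 := by
    have : khat ^ 2 - (σ khat) ^ 2 = 0 := by rw [hsq]; ring
    linear_combination this
  rcases mul_eq_zero.mp hfac with h | h
  · -- σ khat = khat : ε = 0
    have hfix : σ khat = khat := (sub_eq_zero.mp h).symm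
    refine ⟨k * khat, 0, le_refl _ |>.trans (by norm_num), mul_ne_zero hk hkh, ?_⟩
    rw [pow_zero, div_one, heq, map_mul, hfix]
    ring
  · -- σ khat = -khat : ε = 1
    have hneg : σ khat = -khat := eq_neg_of_add_eq_zero_right h
    refine ⟨k * khat * s1⁻¹, 1, le_refl _, ?_, ?_⟩
    · exact mul_ne_zero (mul_ne_zero hk hkh) (inv_ne_zero hs1ne)
    · have hσs1inv : σ s1⁻¹ = -s1⁻¹ := by rw [map_inv₀, hσ1, inv_neg]
      rw [pow_one, map_div₀, heq, map_mul, map_mul, hneg, hσs1inv, ← hs1]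
      field_simp
end

section
/- Let F be a field of characteristic ≠ 2 and K₁ = F(√a₁) a quadratic extension. If K₁/F embeds in a cyclic extension of degree 4 (i.e., there is a field L ⊇ K₁ with L/F Galois and Gal(L/F) ≅ Z/4Z), then −1 is a norm from K₁, i.e., −1 ∈ N_{K₁/F}(K₁×); consequently a₁ ∈ N_{K₁/F}(K₁×). -/
open Polynomial

lemma fixed_mem_range_aux {F L : Type*} [Field F] [Field L] [Algebra F L]
    [IsGalois F L] {x : L} (hx : ∀ σ : L ≃ₐ[F] L, σ x = x) :
    ∃ f : F, algebraMap F L f = x := by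
  classical
  have hnorm : Normal F L := IsGalois.to_normal
  have hint : IsIntegral F x := hnorm.isIntegral x
  have hsep : (minpoly F x).Separable := Algebra.IsSeparable.isSeparable F x
  have hsplit : ((minpoly F x).map (algebraMap F L)).Splits := hnorm.splits x
  by_cases hd : (minpoly F x).natDegree = 1
  · obtain ⟨f, hf⟩ := minpoly.natDegree_eq_one_iff.mp hd
    exact ⟨f, hf⟩
  exfalso
  have hpos := minpoly.natDegree_pos hint
  have h2 : 2 ≤ (minpoly F x).natDegree := by omega
  set q := (minpoly F x).map (algebraMap F L) with hq
  have hq0 : q ≠ 0 := Polynomial.map_ne_zero (minpoly.ne_zero hint)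
  have hcard : q.roots.card = q.natDegree := by
    rw [← Polynomial.splits_iff_card_roots]
    exact hsplit
  have hnd : q.roots.Nodup := Polynomial.nodup_roots (Polynomial.Separable.map hsep)
  have hxq : x ∈ q.roots := by
    rw [Polynomial.mem_roots hq0]
    show q.eval x = 0
    rw [hq, Polynomial.eval_map, ← Polynomial.aeval_def, minpoly.aeval]
  have hcard2 : 2 ≤ q.roots.card := by
    rw [hcard, hq, Polynomial.natDegree_map]; exact h2
  have herase : 0 < (q.roots.erase x).card := by
    have h3 : (q.roots.erase x).card = q.roots.card - 1 := by
      rw [Multiset.card_erase_of_mem hxq, Nat.pred_eq_sub_one]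
    omega
  obtain ⟨y, hy⟩ := Multiset.card_pos_iff_exists_mem.mp herase
  have hyx : y ≠ x := by
    intro h
    subst h
    exact (Multiset.Nodup.notMem_erase hnd) hy
  have hyroot : y ∈ q.roots := Multiset.mem_of_mem_erase hy
  have hyev : (Polynomial.aeval y) (minpoly F x) = 0 := by
    have := (Polynomial.mem_roots hq0).mp hyroot
    rwa [Polynomial.IsRoot, hq, Polynomial.eval_map, ← Polynomial.aeval_def] at this
  obtain ⟨σ, hσ⟩ := minpoly.exists_algEquiv_of_root (hint.isAlgebraic) hyev
  exact hyx (σ.injective (by rw [hσ, hx σ]))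

/-- If the quadratic extension K₁ = F(√a₁) embeds in a cyclic degree-4
extension L/F, then −1 (and hence a₁) is a norm from K₁. -/
theorem stmt_8 (F L : Type*) [Field F] [Field L] [Algebra F L]
    (hchar : (2 : F) ≠ 0) (a1 : F) (ha1 : a1 ≠ 0)
    (hns : ¬ ∃ g : F, a1 = g ^ 2)
    (s : L) (hs : s ^ 2 = algebraMap F L a1)
    (hGal : IsGalois F L)
    (hcyc : Nonempty ((L ≃ₐ[F] L) ≃* Multiplicative (ZMod 4))) :
    (∃ x y : F, x ^ 2 - a1 * y ^ 2 = -1) ∧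
    (∃ x y : F, x ^ 2 - a1 * y ^ 2 = a1) := by
  obtain ⟨e⟩ := hcyc
  have hinj : Function.Injective (algebraMap F L) := (algebraMap F L).injective
  have h2L : (2 : L) ≠ 0 := by
    intro h
    exact hchar (hinj (by rw [map_ofNat, map_zero]; exact h))
  have hsne : s ≠ 0 := by
    intro h
    apply ha1
    have : algebraMap F L a1 = 0 := by rw [← hs, h]; ring
    simpa using hinj (by simpa using this)
  set σ : L ≃ₐ[F] L := e.symm (Multiplicative.ofAdd 1) with hσdef
  have hgen : ∀ g : L ≃ₐ[F] L, ∃ n : ℕ, g = σ ^ n := by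
    intro g
    refine ⟨(Multiplicative.toAdd (e g)).val, ?_⟩
    have h1 : σ ^ (Multiplicative.toAdd (e g)).val
        = e.symm ((Multiplicative.ofAdd (1 : ZMod 4)) ^ (Multiplicative.toAdd (e g)).val) := by
      rw [hσdef, ← map_pow]
    rw [h1, ← ofAdd_nsmul]
    have : ((Multiplicative.toAdd (e g)).val • (1 : ZMod 4)) = Multiplicative.toAdd (e g) := by
      rw [nsmul_eq_mul, mul_one, ZMod.natCast_val, ZMod.cast_id]
    rw [this]
    simp
  have hfix : ∀ z : L, σ z = z → ∃ f : F, algebraMap F L f = z := by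
    intro z hz
    haveI := hGal
    apply fixed_mem_range_aux
    intro g
    obtain ⟨n, rfl⟩ := hgen g
    induction n with
    | zero => rfl
    | succ n ih => rw [pow_succ, AlgEquiv.mul_apply, hz, ih]
  -- σ s = -s
  have hσs : σ s = -s := by
    have hsq : (σ s) ^ 2 = s ^ 2 := by
      rw [← map_pow, hs, AlgEquiv.commutes, ← hs]
    have hz : (σ s - s) * (σ s + s) = 0 := by linear_combination hsq
    rcases mul_eq_zero.mp hz with h | h
    · exfalso
      have hfs : σ s = s := by linear_combination h
      obtain ⟨f, hf⟩ := hfix s hfs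
      apply hns
      exact ⟨f, hinj (by rw [map_pow, hf, hs])⟩
    · linear_combination h
  -- σ^2 and σ^4 facts
  have hs4 : σ ^ 4 = 1 := by
    apply e.injective
    have : e (σ ^ 4) = (Multiplicative.ofAdd (1 : ZMod 4)) ^ 4 := by
      rw [map_pow, hσdef, MulEquiv.apply_symm_apply]
    rw [this, ← ofAdd_nsmul]
    have h40 : (4 • (1 : ZMod 4)) = 0 := by decide
    rw [h40, map_one]
    rfl
  have hs2ne : σ ^ 2 ≠ 1 := by
    intro h
    have : (Multiplicative.ofAdd (1 : ZMod 4)) ^ 2 = 1 := by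
      rw [← MulEquiv.apply_symm_apply e (Multiplicative.ofAdd (1 : ZMod 4)), ← hσdef, ← map_pow, h, map_one]
    rw [← ofAdd_nsmul] at this
    have h21 : (2 • (1 : ZMod 4)) ≠ 0 := by decide
    exact h21 (by exact_mod_cast Multiplicative.ofAdd.injective (by rw [this]; rfl))
  have hpow2 : ∀ z : L, (σ ^ 2) z = σ (σ z) := by
    intro z; rw [pow_two, AlgEquiv.mul_apply]
  -- find w with σ² w = -w, w ≠ 0
  obtain ⟨v, hv⟩ : ∃ v : L, (σ ^ 2) v ≠ v := by
    by_contra h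
    push_neg at h
    exact hs2ne (AlgEquiv.ext h)
  set w : L := v - (σ ^ 2) v with hwdef
  have hwne : w ≠ 0 := by
    intro h
    exact hv (by rw [sub_eq_zero] at h; exact h.symm)
  have hσ2w : σ (σ w) = -w := by
    have e4 : (σ ^ 4) v = σ (σ (σ (σ v))) := by
      rw [show (4:ℕ) = 2 + 2 from rfl, pow_add, AlgEquiv.mul_apply, hpow2, hpow2]
    have h4 : σ (σ (σ (σ v))) = v := by rw [← e4, hs4]; rfl
    rw [hwdef]
    simp only [map_sub, hpow2]
    rw [h4]
    ring
  set β : L := w ^ 2 with hβdef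
  set u : L := w * σ w with hudef
  have hune : u ≠ 0 := mul_ne_zero hwne (fun h => hwne (σ.injective (by rw [h, map_zero])))
  have hσ2β : σ (σ β) = β := by
    rw [hβdef, map_pow, map_pow, hσ2w]; ring
  have hσu : σ u = -u := by
    rw [hudef, map_mul, hσ2w]; ring
  have hσ2u : σ (σ u) = u := by
    rw [hσu, map_neg, hσu]; ring
  -- decomposition of σ²-fixed elements
  have dec : ∀ z : L, σ (σ z) = z → ∃ x y : F,
      z = algebraMap F L x + algebraMap F L y * s := by
    intro z hz
    have hX : σ ((z + σ z) / 2) = (z + σ z) / 2 := by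
      rw [map_div₀, map_add, hz, map_ofNat]
      ring
    have hY : σ ((z - σ z) / (2 * s)) = (z - σ z) / (2 * s) := by
      rw [map_div₀, map_sub, hz, map_mul, map_ofNat, hσs]
      field_simp
      ring
    obtain ⟨x, hx⟩ := hfix _ hX
    obtain ⟨y, hy⟩ := hfix _ hY
    refine ⟨x, y, ?_⟩
    rw [hx, hy]
    field_simp
    ring
  obtain ⟨x₀, y₀, hβ⟩ := dec β hσ2β
  obtain ⟨c, d, hu⟩ := dec u hσ2u
  -- c = 0
  have hc0 : c = 0 := by
    have h1 : σ u = algebraMap F L c - algebraMap F L d * s := by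
      rw [hu, map_add, map_mul, AlgEquiv.commutes, AlgEquiv.commutes, hσs]
      ring
    have h2 : algebraMap F L c - algebraMap F L d * s
        = -(algebraMap F L c + algebraMap F L d * s) := by
      rw [← h1, hσu, hu]
    have h3 : algebraMap F L (2 * c) = 0 := by
      rw [map_mul, map_ofNat]
      linear_combination h2
    have := hinj (by rw [h3, map_zero] : algebraMap F L (2*c) = algebraMap F L 0)
    rcases mul_eq_zero.mp this with h | h
    · exact absurd h hchar
    · exact h
  have hus : u = algebraMap F L d * s := by
    rw [hu, hc0, map_zero, zero_add]
  have hdne : d ≠ 0 := by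
    intro h
    apply hune
    rw [hus, h, map_zero, zero_mul]
  -- key identity β * σ β = u ^ 2
  have hσβ : σ β = algebraMap F L x₀ - algebraMap F L y₀ * s := by
    rw [hβ, map_add, map_mul, AlgEquiv.commutes, AlgEquiv.commutes, hσs]
    ring
  have hβσβ : β * σ β = u ^ 2 := by
    rw [hβdef, hudef, map_pow, mul_pow]
  have hkeyL : algebraMap F L (x₀ ^ 2 - a1 * y₀ ^ 2) = algebraMap F L (d ^ 2 * a1) := by
    have lhs : β * σ β = algebraMap F L (x₀ ^ 2 - a1 * y₀ ^ 2) := by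
      rw [hσβ, hβ, map_sub, map_mul, map_pow, map_pow]
      linear_combination (-(algebraMap F L y₀)^2) * hs
    have rhs : u ^ 2 = algebraMap F L (d ^ 2 * a1) := by
      rw [hus, mul_pow, hs, map_mul, map_pow]
    rw [← lhs, ← rhs]
    exact hβσβ
  have hkey : x₀ ^ 2 - a1 * y₀ ^ 2 = d ^ 2 * a1 := hinj hkeyL
  constructor
  · refine ⟨y₀ / d, x₀ / (d * a1), ?_⟩
    field_simp
    linear_combination (-1 : F) * hkey
  · refine ⟨x₀ / d, y₀ / d, ?_⟩
    field_simp
    linear_combination hkey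
end

section
/- Let F be a field of characteristic ≠ 2, K = F(√a₁,√a₂) biquadratic over F with Galois group generated by σ₁, σ₂ (σᵢ(√aⱼ) = (−1)^{δᵢⱼ}√aⱼ), and let γ ∈ K× with [γ] ∈ (K×/K^{×2}) fixed by Gal(K/F). Let σ̂₂ ∈ Gal(K(√γ)/F) be any lift of σ₂. Then σ̂₂² = id if and only if N_{K/K₁}(γ) = γ·σ₂(γ) is a square in K₁×, where K₁ = F(√a₁). -/
/-- For γ ∈ K× with class fixed by Gal(K/F), a lift σ̂₂ of σ₂ to
Gal(K(√γ)/F) satisfies σ̂₂² = id iff N_{K/K₁}(γ) = γ·σ₂(γ) is a square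
in K₁ = F(√a₁). -/
theorem stmt_10 (F K L : Type*) [Field F] [Field K] [Field L]
    [Algebra F K] [Algebra K L] [Algebra F L] [IsScalarTower F K L]
    (hchar : (2 : F) ≠ 0) (a1 a2 : F)
    (s1 s2 : K) (hs1 : s1 ^ 2 = algebraMap F K a1) (hs2 : s2 ^ 2 = algebraMap F K a2)
    (hli : LinearIndependent F ![(1 : K), s1, s2, s1 * s2])
    (hsp : Submodule.span F ({1, s1, s2, s1 * s2} : Set K) = ⊤)
    (σ2 : K ≃ₐ[F] K) (hσ2s1 : σ2 s1 = s1) (hσ2s2 : σ2 s2 = -s2)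
    (γ : K) (hγ : γ ≠ 0) (hns : ¬ ∃ k : K, γ = k ^ 2)
    (hfix : ∀ σ : K ≃ₐ[F] K, ∃ k : K, σ γ = γ * k ^ 2)
    (t : L) (ht : t ^ 2 = algebraMap K L γ)
    (hadj : Algebra.adjoin K ({t} : Set L) = ⊤)
    (σh : L ≃ₐ[F] L)
    (hlift : ∀ k : K, σh (algebraMap K L k) = algebraMap K L (σ2 k)) :
    σh * σh = 1 ↔
      ∃ u v : F, γ * σ2 γ = (algebraMap F K u + algebraMap F K v * s1) ^ 2 := by
  have hKL : Function.Injective (algebraMap K L) := (algebraMap K L).injective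
  -- σ2 is an involution on K
  have hσ2sq : ∀ x : K, σ2 (σ2 x) = x := by
    intro x
    have hx : x ∈ Submodule.span F ({1, s1, s2, s1 * s2} : Set K) := by
      rw [hsp]; trivial
    induction hx using Submodule.span_induction with
    | mem y hy =>
        simp only [Set.mem_insert_iff, Set.mem_singleton_iff] at hy
        rcases hy with rfl | rfl | rfl | rfl
        · simp
        · simp [hσ2s1]
        · simp [hσ2s2]
        · simp [map_mul, hσ2s1, hσ2s2]
    | zero => simp
    | add a b _ _ ha hb => simp [map_add, ha, hb]
    | smul r a _ ha => simp [map_smul, ha]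
  -- fixed elements of σ2 lie in F + F·s1
  have hfixed : ∀ c : K, σ2 c = c →
      ∃ u v : F, c = algebraMap F K u + algebraMap F K v * s1 := by
    intro c hc
    have hmem : c ∈ Submodule.span F (Set.range ![(1 : K), s1, s2, s1 * s2]) := by
      have hrange : Set.range ![(1 : K), s1, s2, s1 * s2]
          = ({1, s1, s2, s1 * s2} : Set K) := by
        ext y
        simp only [Matrix.range_cons, Matrix.range_empty, Set.union_empty, Set.mem_union,
          Set.mem_insert_iff, Set.mem_singleton_iff]
      rw [hrange, hsp]; trivial
    rw [Submodule.mem_span_range_iff_exists_fun] at hmem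
    obtain ⟨f, hf⟩ := hmem
    simp only [Fin.sum_univ_four, Matrix.cons_val_zero, Matrix.cons_val_one, Matrix.head_cons,
      Matrix.cons_val_two, Matrix.tail_cons, Matrix.cons_val_three, Algebra.smul_def,
      mul_one] at hf
    have hσc : algebraMap F K (f 0) + algebraMap F K (f 1) * s1
        - algebraMap F K (f 2) * s2 - algebraMap F K (f 3) * (s1 * s2) = c := by
      have := congrArg σ2 hf
      simp only [map_add, map_mul, AlgEquiv.commutes, hσ2s1, hσ2s2, hc] at this
      linear_combination this
    have hzero : ∀ i, ![(0 : F), 0, 2 * f 2, 2 * f 3] i = 0 := by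
      apply Fintype.linearIndependent_iff.mp hli
      simp only [Fin.sum_univ_four, Matrix.cons_val_zero, Matrix.cons_val_one, Matrix.head_cons,
        Matrix.cons_val_two, Matrix.tail_cons, Matrix.cons_val_three, Algebra.smul_def,
        mul_one, map_mul, map_zero, map_ofNat]
      linear_combination hf - hσc
    have hf2 : f 2 = 0 := by
      have := hzero 2
      simp only [Matrix.cons_val_two, Matrix.tail_cons, Matrix.head_cons] at this
      rcases mul_eq_zero.mp this with h | h
      · exact absurd h hchar
      · exact h
    have hf3 : f 3 = 0 := by
      have := hzero 3
      simp only [Matrix.cons_val_three, Matrix.tail_cons, Matrix.head_cons] at this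
      rcases mul_eq_zero.mp this with h | h
      · exact absurd h hchar
      · exact h
    refine ⟨f 0, f 1, ?_⟩
    rw [hf2, hf3] at hf
    simp only [map_zero, zero_mul, add_zero] at hf
    exact hf.symm
  obtain ⟨k, hk⟩ := hfix σ2
  have hk0 : k ≠ 0 := by
    intro h
    have hz : σ2 γ = 0 := by rw [hk, h]; ring
    exact hγ (by simpa using hz)
  have ht0 : t ≠ 0 := by
    intro h
    rw [h] at ht
    simp only [ne_eq, OfNat.ofNat_ne_zero, not_false_eq_true, zero_pow] at ht
    exact hγ (hKL (by simpa using ht.symm))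
  -- σh t = ± (algebraMap k) t
  have hσht : σh t = algebraMap K L k * t ∨ σh t = -(algebraMap K L k * t) := by
    have h1 : σh t ^ 2 = (algebraMap K L k * t) ^ 2 := by
      rw [← map_pow, ht, hlift, hk, mul_pow, ht, map_mul, map_pow]
      ring
    have h2 : (σh t - algebraMap K L k * t) * (σh t + algebraMap K L k * t) = 0 := by
      linear_combination h1
    rcases mul_eq_zero.mp h2 with h | h
    · exact Or.inl (sub_eq_zero.mp h)
    · exact Or.inr (eq_neg_of_add_eq_zero_left h)
  have hσσt : σh (σh t) = algebraMap K L (σ2 k * k) * t := by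
    rcases hσht with h | h
    · rw [h, map_mul, hlift, h, map_mul]; ring
    · rw [h, map_neg, map_mul, hlift, h, map_mul]; ring
  have hmain : σh * σh = 1 ↔ σ2 k * k = 1 := by
    constructor
    · intro h
      have h1 : σh (σh t) = t := by
        have := congrArg (fun e : L ≃ₐ[F] L => e t) h
        simpa using this
      rw [hσσt] at h1
      have h2 : algebraMap K L (σ2 k * k) = 1 := by
        have := mul_right_cancel₀ ht0 (h1.trans (one_mul t).symm)
        exact this
      exact hKL (by rw [h2, map_one])
    · intro hkk
      apply AlgEquiv.ext
      intro x
      simp only [AlgEquiv.mul_apply, AlgEquiv.one_apply]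
      have hx : x ∈ Algebra.adjoin K ({t} : Set L) := by rw [hadj]; trivial
      induction hx using Algebra.adjoin_induction with
      | mem y hy =>
          simp only [Set.mem_singleton_iff] at hy
          subst hy
          rw [hσσt, hkk, map_one, one_mul]
      | algebraMap r => rw [hlift, hlift, hσ2sq]
      | add a b _ _ ha hb => rw [map_add, map_add, ha, hb]
      | mul a b _ _ ha hb => rw [map_mul, map_mul, ha, hb]
  rw [hmain]
  constructor
  · intro hkk
    obtain ⟨u, v, huv⟩ := hfixed (γ * k) (by
      rw [map_mul, hk]
      linear_combination γ * k * hkk)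
    exact ⟨u, v, by rw [← huv, hk]; ring⟩
  · rintro ⟨u, v, huv⟩
    set d := algebraMap F K u + algebraMap F K v * s1 with hd_def
    have hd : σ2 d = d := by
      simp [hd_def, map_add, map_mul, AlgEquiv.commutes, hσ2s1]
    have hsq : (γ * k) ^ 2 = d ^ 2 := by
      rw [← huv, hk]; ring
    have hcase : γ * k = d ∨ γ * k = -d := by
      have h2 : (γ * k - d) * (γ * k + d) = 0 := by linear_combination hsq
      rcases mul_eq_zero.mp h2 with h | h
      · exact Or.inl (sub_eq_zero.mp h)
      · exact Or.inr (eq_neg_of_add_eq_zero_left h)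
    have hfixgk : σ2 (γ * k) = γ * k := by
      rcases hcase with h | h <;> rw [h] <;> simp [hd, map_neg]
    rw [map_mul, hk] at hfixgk
    have hγk : γ * k ≠ 0 := mul_ne_zero hγ hk0
    exact mul_left_cancel₀ hγk (by rw [mul_one]; linear_combination hfixgk)
end

section
/- Let F be a field of characteristic ≠ 2, K = F(√a₁,√a₂) biquadratic over F with K₁ = F(√a₁), K₂ = F(√a₂), K₃ = F(√(a₁a₂)). Define T on the subgroup of Gal(K/F)-fixed classes in K×/K^{×2} by T([γ]) = ([N_{K/K₁}(γ)], [N_{K/K₂}(γ)], [N_{K/K₃}(γ)]) with values in the product of the groups (Kᵢ× ∩ K^{×2})/Kᵢ^{×2}. Then the kernel of T is exactly the image of F× in K×/K^{×2}. -/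
/-- The kernel of T([γ]) = ([N_{K/K₁}γ], [N_{K/K₂}γ], [N_{K/K₃}γ]) on the
Gal(K/F)-fixed part of K×/K^{×2} is exactly the image of F×. -/
theorem stmt_11 (F K : Type*) [Field F] [Field K] [Algebra F K]
    (hchar : (2 : F) ≠ 0) (a1 a2 : F)
    (s1 s2 : K) (hs1 : s1 ^ 2 = algebraMap F K a1) (hs2 : s2 ^ 2 = algebraMap F K a2)
    (hli : LinearIndependent F ![(1 : K), s1, s2, s1 * s2])
    (hsp : Submodule.span F ({1, s1, s2, s1 * s2} : Set K) = ⊤)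
    (σ1 σ2 : K ≃ₐ[F] K)
    (hσ1s1 : σ1 s1 = -s1) (hσ1s2 : σ1 s2 = s2)
    (hσ2s1 : σ2 s1 = s1) (hσ2s2 : σ2 s2 = -s2)
    (γ : K) (hγ : γ ≠ 0)
    (hfix1 : ∃ k : K, σ1 γ = γ * k ^ 2) (hfix2 : ∃ k : K, σ2 γ = γ * k ^ 2) :
    ((∃ u v : F, γ * σ2 γ = (algebraMap F K u + algebraMap F K v * s1) ^ 2) ∧
     (∃ u v : F, γ * σ1 γ = (algebraMap F K u + algebraMap F K v * s2) ^ 2) ∧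
     (∃ u v : F, γ * σ1 (σ2 γ) =
        (algebraMap F K u + algebraMap F K v * (s1 * s2)) ^ 2)) ↔
    (∃ f : F, f ≠ 0 ∧ ∃ k : K, γ = algebraMap F K f * k ^ 2) := by
  set i := algebraMap F K with hi
  have inj : Function.Injective i := (algebraMap F K).injective
  have hcm1 : ∀ x : F, σ1 (i x) = i x := fun x => σ1.commutes x
  have hcm2 : ∀ x : F, σ2 (i x) = i x := fun x => σ2.commutes x
  -- coordinates
  have coords : ∀ x : K, ∃ a b c d : F,
      x = i a + i b * s1 + i c * s2 + i d * (s1 * s2) := by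
    intro x
    have hx : x ∈ Submodule.span F (Set.range ![(1:K), s1, s2, s1 * s2]) := by
      have hrg : Set.range ![(1:K), s1, s2, s1 * s2] = ({1, s1, s2, s1 * s2} : Set K) := by
        ext y; simp [Matrix.range_cons, Matrix.range_empty]; tauto
      rw [hrg, hsp]; trivial
    rw [Submodule.mem_span_range_iff_exists_fun] at hx
    obtain ⟨c, hc⟩ := hx
    refine ⟨c 0, c 1, c 2, c 3, ?_⟩
    rw [← hc]
    simp [Fin.sum_univ_four, Algebra.smul_def]
    rfl
  have uniq : ∀ a b c d : F,
      i a + i b * s1 + i c * s2 + i d * (s1 * s2) = 0 →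
      a = 0 ∧ b = 0 ∧ c = 0 ∧ d = 0 := by
    intro a b c d h
    have := Fintype.linearIndependent_iff.mp hli ![a,b,c,d] ?_
    · exact ⟨this 0, this 1, this 2, this 3⟩
    · simpa [Fin.sum_univ_four, Algebra.smul_def] using h
  have s1_ne : s1 ≠ 0 := by
    intro h
    have h0 : i 0 + i 1 * s1 + i 0 * s2 + i 0 * (s1 * s2) = 0 := by simp [h]
    exact one_ne_zero (uniq 0 1 0 0 h0).2.1
  have s2_ne : s2 ≠ 0 := by
    intro h
    have h0 : i 0 + i 0 * s1 + i 1 * s2 + i 0 * (s1 * s2) = 0 := by simp [h]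
    exact one_ne_zero (uniq 0 0 1 0 h0).2.2.1
  have a1_ne : a1 ≠ 0 := by
    intro h
    have : s1 ^ 2 = 0 := by rw [hs1, h, map_zero]
    exact s1_ne (pow_eq_zero_iff (n := 2) (by norm_num) |>.mp this)
  have hs2sq : ∀ r : F, a2 ≠ r ^ 2 := by
    intro r hr
    have h0 : (s2 - i r) * (s2 + i r) = 0 := by
      have : s2 ^ 2 = i r ^ 2 := by rw [hs2, hr, map_pow]
      linear_combination this
    rcases mul_eq_zero.mp h0 with h | h
    · have h1 : i r + i 0 * s1 + i (-1) * s2 + i 0 * (s1 * s2) = 0 := by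
        simp only [map_zero, map_neg, map_one, zero_mul, add_zero]
        linear_combination -h
      have := (uniq r 0 (-1) 0 h1).2.2.1
      simp at this
    · have h1 : i r + i 0 * s1 + i 1 * s2 + i 0 * (s1 * s2) = 0 := by
        simp only [map_zero, map_one, zero_mul, add_zero, one_mul]
        linear_combination h
      have := (uniq r 0 1 0 h1).2.2.1
      simp at this
  -- involutions and commutation
  have invol1 : ∀ x : K, σ1 (σ1 x) = x := by
    intro x
    obtain ⟨a, b, c, d, rfl⟩ := coords x
    simp [map_add, map_mul, map_neg, hσ1s1, hσ1s2, hcm1]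
  have invol2 : ∀ x : K, σ2 (σ2 x) = x := by
    intro x
    obtain ⟨a, b, c, d, rfl⟩ := coords x
    simp [map_add, map_mul, map_neg, hσ2s1, hσ2s2, hcm2]
  have comm : ∀ x : K, σ1 (σ2 x) = σ2 (σ1 x) := by
    intro x
    obtain ⟨a, b, c, d, rfl⟩ := coords x
    simp [map_add, map_mul, map_neg, hσ1s1, hσ1s2, hσ2s1, hσ2s2, hcm1, hcm2]
  have jj : ∀ x : K, σ1 (σ2 (σ1 (σ2 x))) = x := by
    intro x
    rw [← comm (σ2 x), invol2, invol1]
  -- fixed point characterizations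
  have fixA : ∀ x : K, σ1 x = x → ∃ a c : F, x = i a + i c * s2 := by
    intro x hx
    obtain ⟨a, b, c, d, rfl⟩ := coords x
    have hσ : σ1 (i a + i b * s1 + i c * s2 + i d * (s1 * s2))
        = i a - i b * s1 + i c * s2 - i d * (s1 * s2) := by
      simp [map_add, map_mul, hσ1s1, hσ1s2, hcm1]; ring
    rw [hσ] at hx
    have h0 : i 0 + i (2*b) * s1 + i 0 * s2 + i (2*d) * (s1 * s2) = 0 := by
      simp only [map_mul, map_zero, map_ofNat, zero_mul, add_zero, zero_add]
      linear_combination -hx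
    obtain ⟨-, hb, -, hd⟩ := uniq _ _ _ _ h0
    have hb' : b = 0 := (mul_eq_zero.mp hb).resolve_left hchar
    have hd' : d = 0 := (mul_eq_zero.mp hd).resolve_left hchar
    exact ⟨a, c, by rw [hb', hd']; simp⟩
  have fixB : ∀ x : K, σ2 x = x → ∃ a b : F, x = i a + i b * s1 := by
    intro x hx
    obtain ⟨a, b, c, d, rfl⟩ := coords x
    have hσ : σ2 (i a + i b * s1 + i c * s2 + i d * (s1 * s2))
        = i a + i b * s1 - i c * s2 - i d * (s1 * s2) := by
      simp [map_add, map_mul, hσ2s1, hσ2s2, hcm2]; ring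
    rw [hσ] at hx
    have h0 : i 0 + i 0 * s1 + i (2*c) * s2 + i (2*d) * (s1 * s2) = 0 := by
      simp only [map_mul, map_zero, map_ofNat, zero_mul, add_zero, zero_add]
      linear_combination -hx
    obtain ⟨-, -, hc, hd⟩ := uniq _ _ _ _ h0
    have hc' : c = 0 := (mul_eq_zero.mp hc).resolve_left hchar
    have hd' : d = 0 := (mul_eq_zero.mp hd).resolve_left hchar
    exact ⟨a, b, by rw [hc', hd']; simp⟩
  have fixC : ∀ x : K, σ1 (σ2 x) = x → ∃ a d : F, x = i a + i d * (s1 * s2) := by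
    intro x hx
    obtain ⟨a, b, c, d, rfl⟩ := coords x
    have hσ : σ1 (σ2 (i a + i b * s1 + i c * s2 + i d * (s1 * s2)))
        = i a - i b * s1 - i c * s2 + i d * (s1 * s2) := by
      simp [map_add, map_sub, map_mul, map_neg, hσ1s1, hσ1s2, hσ2s1, hσ2s2, hcm1, hcm2]; ring
    rw [hσ] at hx
    have h0 : i 0 + i (2*b) * s1 + i (2*c) * s2 + i 0 * (s1 * s2) = 0 := by
      simp only [map_mul, map_zero, map_ofNat, zero_mul, add_zero, zero_add]
      linear_combination -hx
    obtain ⟨-, hb, hc, -⟩ := uniq _ _ _ _ h0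
    have hb' : b = 0 := (mul_eq_zero.mp hb).resolve_left hchar
    have hc' : c = 0 := (mul_eq_zero.mp hc).resolve_left hchar
    exact ⟨a, d, by rw [hb', hc']; simp⟩
  constructor
  · rintro ⟨⟨u1, v1, hc1⟩, ⟨u2, v2, hc2⟩, ⟨u3, v3, hc3⟩⟩
    obtain ⟨α, hα⟩ := hfix1
    have hσ1γ_ne : σ1 γ ≠ 0 := fun h => hγ (by simpa using σ1.injective (h.trans (map_zero σ1).symm))
    have hα_ne : α ≠ 0 := fun h => hσ1γ_ne (by rw [hα, h]; ring)
    -- γ*α is σ1-fixed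
    have key2 : (γ * α - (i u2 + i v2 * s2)) * (γ * α + (i u2 + i v2 * s2)) = 0 := by
      have h := hc2; rw [hα] at h; linear_combination h
    have hwfix : σ1 (i u2 + i v2 * s2) = i u2 + i v2 * s2 := by
      simp [map_add, map_mul, hσ1s2, hcm1]
    have hfixγα : σ1 (γ * α) = γ * α := by
      rcases mul_eq_zero.mp key2 with h | h
      · have h' : γ * α = i u2 + i v2 * s2 := by linear_combination h
        rw [h', hwfix]
      · have h' : γ * α = -(i u2 + i v2 * s2) := by linear_combination h
        rw [h', map_neg, hwfix]
    have hrel : α * σ1 α = 1 := by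
      have h := hfixγα
      rw [map_mul, hα] at h
      have h2 : γ * α * (α * σ1 α) = γ * α * 1 := by linear_combination h
      exact mul_left_cancel₀ (mul_ne_zero hγ hα_ne) h2
    -- explicit Hilbert 90
    obtain ⟨e, he_ne, heσ⟩ : ∃ e : K, e ≠ 0 ∧ σ1 e = α * e := by
      by_cases hαm : α = -1
      · exact ⟨s1, s1_ne, by rw [hσ1s1, hαm]; ring⟩
      · refine ⟨1 + σ1 α, ?_, ?_⟩
        · intro h0
          have h1 : (1 + σ1 α) * α = α + 1 := by linear_combination hrel
          rw [h0, zero_mul] at h1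
          exact hαm (by linear_combination -h1)
        · rw [map_add, map_one, invol1 α]
          linear_combination -hrel
    set δ := γ / e ^ 2 with hδdef
    have hγδ : γ = δ * e ^ 2 := (div_mul_cancel₀ γ (pow_ne_zero 2 he_ne)).symm
    have hδ_ne : δ ≠ 0 := div_ne_zero hγ (pow_ne_zero 2 he_ne)
    have hδfix : σ1 δ = δ := by
      rw [hδdef, map_div₀, map_pow, heσ, hα]
      field_simp
    obtain ⟨p, q, hpq⟩ := fixA δ hδfix
    have hσ2δ : σ2 δ = i p - i q * s2 := by
      rw [hpq]; simp [map_add, map_mul, hσ2s2, hcm2]; ring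
    set n := p ^ 2 - a2 * q ^ 2 with hn
    have hδn : δ * σ2 δ = i n := by
      rw [hσ2δ, hpq, hn]
      simp only [map_sub, map_pow, map_mul]
      linear_combination -(i q)^2 * hs2
    have hσ2δ_ne : σ2 δ ≠ 0 := fun h => hδ_ne (by simpa using σ2.injective (h.trans (map_zero σ2).symm))
    have hn_ne : n ≠ 0 := by
      intro h0
      rw [h0, map_zero] at hδn
      exact mul_ne_zero hδ_ne hσ2δ_ne hδn
    have hσ2e_ne : σ2 e ≠ 0 := fun h => he_ne (by simpa using σ2.injective (h.trans (map_zero σ2).symm))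
    have hσ12e_ne : σ1 (σ2 e) ≠ 0 := fun h => hσ2e_ne (by simpa using σ1.injective (h.trans (map_zero σ1).symm))
    -- condition 1 analysis
    have hγσ2γ : γ * σ2 γ = i n * (e * σ2 e) ^ 2 := by
      rw [hγδ, map_mul, map_pow]
      linear_combination (e * σ2 e)^2 * hδn
    have hE1_ne : e * σ2 e ≠ 0 := mul_ne_zero he_ne hσ2e_ne
    set t := (i u1 + i v1 * s1) / (e * σ2 e) with ht
    have ht2 : t ^ 2 = i n := by
      rw [ht, div_pow, ← hc1, hγσ2γ]
      field_simp
    have htfix : σ2 t = t := by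
      rw [ht, map_div₀, map_mul, invol2]
      congr 1
      · simp [map_add, map_mul, hσ2s1, hcm2]
      · ring
    obtain ⟨a, b, hab⟩ := fixB t htfix
    have h1 : i (a^2 + a1*b^2 - n) + i (2*a*b) * s1 + i 0 * s2 + i 0 * (s1 * s2) = 0 := by
      have hth := ht2; rw [hab] at hth
      simp only [map_add, map_sub, map_mul, map_pow, map_ofNat, map_zero, zero_mul, add_zero]
      linear_combination hth - (i b)^2 * hs1
    obtain ⟨hA, hB, -, -⟩ := uniq _ _ _ _ h1
    have hA' : a^2 + a1*b^2 = n := by linear_combination hA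
    have hab0 : a = 0 ∨ b = 0 := by
      rcases mul_eq_zero.mp hB with h | h
      · exact Or.inl ((mul_eq_zero.mp h).resolve_left hchar)
      · exact Or.inr h
    -- condition 3 analysis
    have hσ1σ2δ : σ1 (σ2 δ) = σ2 δ := by
      rw [hσ2δ]; simp [map_sub, map_mul, hσ1s2, hcm1]
    have hγσ3 : γ * σ1 (σ2 γ) = i n * (e * σ1 (σ2 e)) ^ 2 := by
      rw [hγδ, map_mul, map_pow, map_mul, map_pow, hσ1σ2δ]
      linear_combination (e * σ1 (σ2 e))^2 * hδn
    have hE3_ne : e * σ1 (σ2 e) ≠ 0 := mul_ne_zero he_ne hσ12e_ne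
    set t3 := (i u3 + i v3 * (s1 * s2)) / (e * σ1 (σ2 e)) with ht3def
    have ht32 : t3 ^ 2 = i n := by
      rw [ht3def, div_pow, ← hc3, hγσ3]
      field_simp
    have ht3fix : σ1 (σ2 t3) = t3 := by
      rw [ht3def, map_div₀, map_div₀, map_mul, map_mul, jj]
      congr 1
      · simp [map_add, map_mul, map_neg, hσ2s1, hσ2s2, hσ1s1, hσ1s2, hcm1, hcm2]
      · ring
    obtain ⟨c, d, hcd⟩ := fixC t3 ht3fix
    have h3 : i (c^2 + a1*a2*d^2 - n) + i 0 * s1 + i 0 * s2 + i (2*c*d) * (s1 * s2) = 0 := by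
      have hth := ht32; rw [hcd] at hth
      simp only [map_add, map_sub, map_mul, map_pow, map_ofNat, map_zero, zero_mul, add_zero]
      linear_combination hth - (i d)^2 * ((s2)^2 * hs1 + (i a1) * hs2)
    obtain ⟨hC, -, -, hD⟩ := uniq _ _ _ _ h3
    have hC' : c^2 + a1*a2*d^2 = n := by linear_combination hC
    have hcd0 : c = 0 ∨ d = 0 := by
      rcases mul_eq_zero.mp hD with h | h
      · exact Or.inl ((mul_eq_zero.mp h).resolve_left hchar)
      · exact Or.inr h
    -- combine: n is a nonzero square in F
    obtain ⟨u, hu_ne, husq⟩ : ∃ u : F, u ≠ 0 ∧ n = u ^ 2 := by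
      rcases hab0 with hA0 | hB0
      · rcases hcd0 with hC0 | hD0
        · -- a = 0, c = 0 : contradiction
          exfalso
          have hb_ne : b ≠ 0 := by
            intro h; apply hn_ne; rw [← hA', hA0, h]; ring
          have hd_ne : d ≠ 0 := by
            intro h; apply hn_ne; rw [← hC', hC0, h]; ring
          have h4 : a1 * b^2 = a1 * (a2 * d^2) := by
            rw [hA0] at hA'; rw [hC0] at hC'
            linear_combination hA' - hC'
          have h5 : b^2 = a2 * d^2 := mul_left_cancel₀ a1_ne h4
          refine hs2sq (b / d) ?_
          field_simp
          linear_combination -h5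
        · refine ⟨c, ?_, ?_⟩
          · intro h; apply hn_ne; rw [← hC', hD0, h]; ring
          · rw [← hC', hD0]; ring
      · refine ⟨a, ?_, ?_⟩
        · intro h; apply hn_ne; rw [← hA', hB0, h]; ring
        · rw [← hA', hB0]; ring
    -- Hilbert 90 in K2
    have hδu : δ * σ2 δ = i u ^ 2 := by rw [hδn, husq, map_pow]
    by_cases hdd : δ + i u = 0
    · refine ⟨-u, neg_ne_zero.mpr hu_ne, e, ?_⟩
      have hδval : δ = -(i u) := by linear_combination hdd
      rw [hγδ, hδval, map_neg]
    · have hstep : δ * σ2 (δ + i u) = i u * (δ + i u) := by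
        rw [map_add, hcm2 u]
        linear_combination hδu
      have hdd_eq : δ + i u = i (p + u) + i q * s2 := by
        rw [hpq, map_add]; ring
      have hσ2dd : σ2 (δ + i u) = i (p + u) - i q * s2 := by
        rw [map_add, hcm2 u, hσ2δ, map_add]; ring
      set g := (p + u)^2 - a2 * q^2 with hgdef
      have hg : (δ + i u) * σ2 (δ + i u) = i g := by
        rw [hσ2dd, hdd_eq, hgdef]
        simp only [map_sub, map_pow, map_mul, map_add]
        linear_combination -(i q)^2 * hs2
      have hσ2dd_ne : σ2 (δ + i u) ≠ 0 :=
        fun h => hdd (by simpa using σ2.injective (h.trans (map_zero σ2).symm))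
      have hg_ne : g ≠ 0 := by
        intro h0; rw [h0, map_zero] at hg
        exact mul_ne_zero hdd hσ2dd_ne hg
      refine ⟨u / g, div_ne_zero hu_ne hg_ne, (δ + i u) * e, ?_⟩
      have hgK : i g ≠ 0 := fun h => hg_ne (inj (by rw [h, map_zero]))
      have hmain : δ * i g = i u * (δ + i u)^2 := by
        linear_combination (δ + i u) * hstep - δ * hg
      have hδeq : δ = i (u / g) * (δ + i u)^2 := by
        rw [map_div₀, div_mul_eq_mul_div, eq_div_iff hgK]
        exact hmain
      rw [hγδ]
      linear_combination e^2 * hδeq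
  · rintro ⟨f, hf, k, rfl⟩
    have hk_ne : k ≠ 0 := by
      intro h; rw [h] at hγ; simp at hγ
    refine ⟨?_, ?_, ?_⟩
    · have hfix : σ2 (k * σ2 k) = k * σ2 k := by
        rw [map_mul, invol2]; ring
      obtain ⟨a, b, hab⟩ := fixB _ hfix
      refine ⟨f * a, f * b, ?_⟩
      simp only [map_mul, map_pow, hcm1, hcm2]
      linear_combination (i f)^2 * (k * σ2 k + (i a + i b * s1)) * hab
    · have hfix : σ1 (k * σ1 k) = k * σ1 k := by
        rw [map_mul, invol1]; ring
      obtain ⟨a, b, hab⟩ := fixA _ hfix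
      refine ⟨f * a, f * b, ?_⟩
      simp only [map_mul, map_pow, hcm1, hcm2]
      linear_combination (i f)^2 * (k * σ1 k + (i a + i b * s2)) * hab
    · have hfix : σ1 (σ2 (k * σ1 (σ2 k))) = k * σ1 (σ2 k) := by
        rw [map_mul, map_mul, jj]; ring
      obtain ⟨a, b, hab⟩ := fixC _ hfix
      refine ⟨f * a, f * b, ?_⟩
      simp only [map_mul, map_pow, hcm1, hcm2]
      linear_combination (i f)^2 * (k * σ1 (σ2 k) + (i a + i b * (s1 * s2))) * hab
end

section
/- Let F be a field of characteristic ≠ 2 and K = F(√a₁,√a₂) biquadratic over F with Galois group generated by σ₁, σ₂. Suppose γ ∈ K× satisfies N_{K/F}(γ) ∈ K^{×2} (i.e., the class of γ·σ₁(γ)·σ₂(γ)·σ₁σ₂(γ) is trivial in K×/K^{×2}). Then N_{K/F}(γ) = f²·a₁^{ε₁}·a₂^{ε₂} for some f ∈ F× and ε₁, ε₂ ∈ {0,1}, and moreover the class of N_{K/K₂}(N_{K/K₁}(γ)) = N_{K/F}(γ) in (K₂× ∩ K^{×2})/K₂^{×2} equals [a₁]^{ε₁}. -/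
/-- If N_{K/F}(γ) is a square in K, then N_{K/F}(γ) = f²a₁^{ε₁}a₂^{ε₂} with
f ∈ F×, ε ∈ {0,1}, and the class of N_{K/F}(γ) in (K₂× ∩ K^{×2})/K₂^{×2}
is [a₁]^{ε₁}. -/
theorem stmt_13 (F K : Type*) [Field F] [Field K] [Algebra F K]
    (hchar : (2 : F) ≠ 0) (a1 a2 : F)
    (s1 s2 : K) (hs1 : s1 ^ 2 = algebraMap F K a1) (hs2 : s2 ^ 2 = algebraMap F K a2)
    (hli : LinearIndependent F ![(1 : K), s1, s2, s1 * s2])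
    (hsp : Submodule.span F ({1, s1, s2, s1 * s2} : Set K) = ⊤)
    (σ1 σ2 : K ≃ₐ[F] K)
    (hσ1s1 : σ1 s1 = -s1) (hσ1s2 : σ1 s2 = s2)
    (hσ2s1 : σ2 s1 = s1) (hσ2s2 : σ2 s2 = -s2)
    (γ : K) (hγ : γ ≠ 0)
    (hN : ∃ k : K, γ * σ1 γ * σ2 γ * σ1 (σ2 γ) = k ^ 2) :
    ∃ (f : F) (ε1 ε2 : ℕ), f ≠ 0 ∧ ε1 ≤ 1 ∧ ε2 ≤ 1 ∧
      γ * σ1 γ * σ2 γ * σ1 (σ2 γ) = algebraMap F K (f ^ 2 * a1 ^ ε1 * a2 ^ ε2) ∧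
      ∃ u v : F, γ * σ1 γ * σ2 γ * σ1 (σ2 γ) =
        (algebraMap F K a1) ^ ε1 * (algebraMap F K u + algebraMap F K v * s2) ^ 2 := by
  classical
  rw [Fintype.linearIndependent_iff] at hli
  have key : ∀ c0 c1 c2 c3 : F,
      algebraMap F K c0 + algebraMap F K c1 * s1 + algebraMap F K c2 * s2
        + algebraMap F K c3 * (s1 * s2) = 0 →
      c0 = 0 ∧ c1 = 0 ∧ c2 = 0 ∧ c3 = 0 := by
    intro c0 c1 c2 c3 h
    have h' : ∑ i : Fin 4, ![c0,c1,c2,c3] i • ![(1:K), s1, s2, s1*s2] i = 0 := by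
      simp only [Fin.sum_univ_four, Matrix.cons_val_zero, Matrix.cons_val_one, Matrix.head_cons,
        Algebra.smul_def, mul_one, Matrix.cons_val_two, Matrix.tail_cons, Matrix.cons_val_three]
      exact h
    have := hli ![c0,c1,c2,c3] h'
    exact ⟨this 0, this 1, this 2, this 3⟩
  have hsp' : Submodule.span F (Set.range ![(1:K), s1, s2, s1*s2]) = ⊤ := by
    have : Set.range ![(1:K), s1, s2, s1*s2] = ({1, s1, s2, s1 * s2} : Set K) := by
      ext x
      constructor
      · rintro ⟨i, rfl⟩; fin_cases i <;> simp
      · rintro (rfl|rfl|rfl|rfl)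
        exacts [⟨0, rfl⟩, ⟨1, rfl⟩, ⟨2, rfl⟩, ⟨3, rfl⟩]
    rw [this, hsp]
  have rep : ∀ x : K, ∃ c0 c1 c2 c3 : F,
      x = algebraMap F K c0 + algebraMap F K c1 * s1 + algebraMap F K c2 * s2
        + algebraMap F K c3 * (s1*s2) := by
    intro x
    have hx : x ∈ Submodule.span F (Set.range ![(1:K), s1, s2, s1*s2]) := by
      rw [hsp']; trivial
    rw [Submodule.mem_span_range_iff_exists_fun] at hx
    obtain ⟨c, hc⟩ := hx
    refine ⟨c 0, c 1, c 2, c 3, ?_⟩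
    rw [← hc]
    simp [Fin.sum_univ_four, Algebra.smul_def]
  -- pointwise extensionality on generators
  have ext4 : ∀ f g : K →ₗ[F] K, f 1 = g 1 → f s1 = g s1 → f s2 = g s2 →
      f (s1*s2) = g (s1*s2) → f = g := by
    intro f g h1 h2 h3 h4
    apply LinearMap.ext_on hsp
    intro x hx
    simp only [Set.mem_insert_iff, Set.mem_singleton_iff] at hx
    rcases hx with rfl|rfl|rfl|rfl <;> assumption
  have h11 : ∀ x : K, σ1 (σ1 x) = x := by
    intro x
    have h := ext4 (σ1.toLinearMap ∘ₗ σ1.toLinearMap) LinearMap.id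
      (by simp) (by simp [hσ1s1]) (by simp [hσ1s2]) (by simp [hσ1s1, hσ1s2])
    simpa using LinearMap.congr_fun h x
  have h22 : ∀ x : K, σ2 (σ2 x) = x := by
    intro x
    have h := ext4 (σ2.toLinearMap ∘ₗ σ2.toLinearMap) LinearMap.id
      (by simp) (by simp [hσ2s1]) (by simp [hσ2s2]) (by simp [hσ2s1, hσ2s2])
    simpa using LinearMap.congr_fun h x
  have hcomm : ∀ x : K, σ1 (σ2 x) = σ2 (σ1 x) := by
    intro x
    have h := ext4 (σ1.toLinearMap ∘ₗ σ2.toLinearMap) (σ2.toLinearMap ∘ₗ σ1.toLinearMap)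
      (by simp) (by simp [hσ1s1, hσ2s1]) (by simp [hσ1s2, hσ2s2])
      (by simp [hσ1s1, hσ2s1, hσ1s2, hσ2s2])
    simpa using LinearMap.congr_fun h x
  set N : K := γ * σ1 γ * σ2 γ * σ1 (σ2 γ) with hNdef
  have hN0 : N ≠ 0 := by
    apply mul_ne_zero (mul_ne_zero (mul_ne_zero hγ _) _) _
    · exact fun h => hγ (σ1.injective (by simp [h]))
    · exact fun h => hγ (σ2.injective (by simp [h]))
    · exact fun h => hγ (σ2.injective (σ1.injective (by simp [h])))
  have hσ1N : σ1 N = N := by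
    simp only [hNdef, map_mul, h11]
    ring
  have hσ2N : σ2 N = N := by
    simp only [hNdef, map_mul, h22, ← hcomm, h11]
    ring
  obtain ⟨k, hk⟩ := hN
  have hk0 : k ≠ 0 := by
    intro h; rw [h] at hk; simp at hk; exact hN0 hk
  have hσ1k : σ1 k = k ∨ σ1 k = -k := by
    have h2 : (σ1 k - k) * (σ1 k + k) = 0 := by
      have : (σ1 k) ^ 2 = k ^ 2 := by rw [← map_pow, ← hk, hσ1N]
      linear_combination this
    rcases mul_eq_zero.mp h2 with h | h
    · exact Or.inl (sub_eq_zero.mp h)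
    · exact Or.inr (eq_neg_of_add_eq_zero_left h)
  have hσ2k : σ2 k = k ∨ σ2 k = -k := by
    have h2 : (σ2 k - k) * (σ2 k + k) = 0 := by
      have : (σ2 k) ^ 2 = k ^ 2 := by rw [← map_pow, ← hk, hσ2N]
      linear_combination this
    rcases mul_eq_zero.mp h2 with h | h
    · exact Or.inl (sub_eq_zero.mp h)
    · exact Or.inr (eq_neg_of_add_eq_zero_left h)
  obtain ⟨c0, c1, c2, c3, hck⟩ := rep k
  have hσ1kval : σ1 k = algebraMap F K c0 - algebraMap F K c1 * s1
      + algebraMap F K c2 * s2 - algebraMap F K c3 * (s1*s2) := by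
    rw [hck]
    simp [map_mul, hσ1s1, hσ1s2, AlgEquiv.commutes]
    ring
  have hσ2kval : σ2 k = algebraMap F K c0 + algebraMap F K c1 * s1
      - algebraMap F K c2 * s2 - algebraMap F K c3 * (s1*s2) := by
    rw [hck]
    simp [map_mul, hσ2s1, hσ2s2, AlgEquiv.commutes]
    ring
  have htwo : (2:F) ≠ 0 := hchar
  have h2K : (algebraMap F K) (2:F) = 2 := map_ofNat _ 2
  rcases hσ1k with h1 | h1 <;> rcases hσ2k with h2 | h2
  · -- k ∈ F·1
    rw [hσ1kval, hck] at h1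
    rw [hσ2kval, hck] at h2
    obtain ⟨-, hb, -, hd⟩ := key 0 (2*c1) 0 (2*c3) (by
      simp only [map_mul, map_zero, h2K]
      linear_combination -h1)
    obtain ⟨-, -, hc, -⟩ := key 0 0 (2*c2) (2*c3) (by
      simp only [map_mul, map_zero, h2K]
      linear_combination -h2)
    have hc1 := (mul_eq_zero.mp hb).resolve_left htwo
    have hc3 := (mul_eq_zero.mp hd).resolve_left htwo
    have hc2 := (mul_eq_zero.mp hc).resolve_left htwo
    have hkf : k = algebraMap F K c0 := by rw [hck, hc1, hc2, hc3]; simp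
    have hc0 : c0 ≠ 0 := fun h => hk0 (by rw [hkf, h, map_zero])
    refine ⟨c0, 0, 0, hc0, zero_le_one, zero_le_one, ?_, c0, 0, ?_⟩
    · rw [hk, hkf]
      simp [map_pow]
    · rw [hk, hkf]
      simp
  · -- k ∈ F·s2
    rw [hσ1kval, hck] at h1
    rw [hσ2kval, hck] at h2
    obtain ⟨-, hb, -, hd⟩ := key 0 (2*c1) 0 (2*c3) (by
      simp only [map_mul, map_zero, h2K]
      linear_combination -h1)
    obtain ⟨ha, -, -, -⟩ := key (2*c0) (2*c1) 0 0 (by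
      simp only [map_mul, map_zero, h2K]
      linear_combination h2)
    have hc1 := (mul_eq_zero.mp hb).resolve_left htwo
    have hc3 := (mul_eq_zero.mp hd).resolve_left htwo
    have hc0 := (mul_eq_zero.mp ha).resolve_left htwo
    have hkf : k = algebraMap F K c2 * s2 := by rw [hck, hc0, hc1, hc3]; simp
    have hc2 : c2 ≠ 0 := fun h => hk0 (by rw [hkf, h, map_zero, zero_mul])
    refine ⟨c2, 0, 1, hc2, zero_le_one, le_refl 1, ?_, 0, c2, ?_⟩
    · rw [hk, hkf]
      simp only [pow_zero, pow_one, mul_one, one_mul, map_mul, map_pow, mul_pow, hs2]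
    · rw [hk, hkf]
      simp
  · -- k ∈ F·s1
    rw [hσ1kval, hck] at h1
    rw [hσ2kval, hck] at h2
    obtain ⟨ha, -, hc, -⟩ := key (2*c0) 0 (2*c2) 0 (by
      simp only [map_mul, map_zero, h2K]
      linear_combination h1)
    obtain ⟨-, -, -, hd⟩ := key 0 0 (2*c2) (2*c3) (by
      simp only [map_mul, map_zero, h2K]
      linear_combination -h2)
    have hc0 := (mul_eq_zero.mp ha).resolve_left htwo
    have hc2 := (mul_eq_zero.mp hc).resolve_left htwo
    have hc3 := (mul_eq_zero.mp hd).resolve_left htwo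
    have hkf : k = algebraMap F K c1 * s1 := by rw [hck, hc0, hc2, hc3]; simp
    have hc1 : c1 ≠ 0 := fun h => hk0 (by rw [hkf, h, map_zero, zero_mul])
    refine ⟨c1, 1, 0, hc1, le_refl 1, zero_le_one, ?_, c1, 0, ?_⟩
    · rw [hk, hkf]
      simp only [pow_zero, pow_one, mul_one, one_mul, map_mul, map_pow, mul_pow, hs1]
    · rw [hk, hkf]
      simp only [map_zero, zero_mul, add_zero, pow_one, mul_pow, hs1]
      ring
  · -- k ∈ F·s1s2
    rw [hσ1kval, hck] at h1
    rw [hσ2kval, hck] at h2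
    obtain ⟨ha, -, hc, -⟩ := key (2*c0) 0 (2*c2) 0 (by
      simp only [map_mul, map_zero, h2K]
      linear_combination h1)
    obtain ⟨-, hb, -, -⟩ := key (2*c0) (2*c1) 0 0 (by
      simp only [map_mul, map_zero, h2K]
      linear_combination h2)
    have hc0 := (mul_eq_zero.mp ha).resolve_left htwo
    have hc2 := (mul_eq_zero.mp hc).resolve_left htwo
    have hc1 := (mul_eq_zero.mp hb).resolve_left htwo
    have hkf : k = algebraMap F K c3 * (s1 * s2) := by rw [hck, hc0, hc1, hc2]; simp
    have hc3 : c3 ≠ 0 := fun h => hk0 (by rw [hkf, h, map_zero, zero_mul])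
    refine ⟨c3, 1, 1, hc3, le_refl 1, le_refl 1, ?_, 0, c3, ?_⟩
    · rw [hk, hkf]
      simp only [pow_one, map_mul, map_pow, mul_pow, hs1, hs2]
      ring
    · rw [hk, hkf]
      simp only [map_zero, zero_mul, zero_add, pow_one, mul_pow, hs1, hs2]
      ring
end

section
/- There is no rational solution (x, y) ∈ Q² to the equation 5 = 13y² − x². Equivalently, there is no integral solution (u, v, w) ∈ Z³ with (u,v,w) ≠ (0,0,0) to 5u² = 13v² − w². -/
private lemma zmod5_aux : ∀ a b u : ZMod 5, b ^ 2 = 13 * a ^ 2 - 5 * u ^ 2 → a = 0 ∧ b = 0 := by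
  decide

private lemma descent : ∀ n : ℕ, ∀ u v w : ℤ,
    u.natAbs + v.natAbs + w.natAbs = n → 5 * u ^ 2 = 13 * v ^ 2 - w ^ 2 →
    u = 0 ∧ v = 0 ∧ w = 0 := by
  intro n
  induction n using Nat.strong_induction_on with
  | _ n ih =>
    intro u v w hn h
    have hz : ((w : ZMod 5)) ^ 2 = 13 * (v : ZMod 5) ^ 2 - 5 * (u : ZMod 5) ^ 2 := by
      have := congrArg (fun z : ℤ => (z : ZMod 5)) h
      push_cast at this
      linear_combination this
    obtain ⟨hv0, hw0⟩ := zmod5_aux (v : ZMod 5) (w : ZMod 5) (u : ZMod 5) hz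
    obtain ⟨a, rfl⟩ := (ZMod.intCast_zmod_eq_zero_iff_dvd v 5).mp hv0
    obtain ⟨b, rfl⟩ := (ZMod.intCast_zmod_eq_zero_iff_dvd w 5).mp hw0
    have hu2 : u ^ 2 = 5 * (13 * a ^ 2 - b ^ 2) := by ring_nf; ring_nf at h; linarith
    have h5u : (5 : ℤ) ∣ u := by
      have hp : Prime (5 : ℤ) := by norm_num
      exact hp.dvd_of_dvd_pow (n := 2) ⟨_, hu2⟩
    obtain ⟨c, rfl⟩ := h5u
    have h' : 5 * c ^ 2 = 13 * a ^ 2 - b ^ 2 := by nlinarith [hu2]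
    rcases Nat.eq_zero_or_pos n with hn0 | hnpos
    · subst hn0
      simp only [Nat.add_eq_zero, Int.natAbs_eq_zero] at hn
      exact ⟨hn.1.1, hn.1.2, hn.2⟩
    · have hna : (5 * c).natAbs = 5 * c.natAbs := by
        rw [Int.natAbs_mul]; rfl
      have hnb : (5 * a).natAbs = 5 * a.natAbs := by
        rw [Int.natAbs_mul]; rfl
      have hnc : (5 * b).natAbs = 5 * b.natAbs := by
        rw [Int.natAbs_mul]; rfl
      set m := c.natAbs + a.natAbs + b.natAbs with hm
      have hlt : m < n := by omega
      obtain ⟨hc, ha, hb⟩ := ih m hlt c a b rfl h'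
      subst hc; subst ha; subst hb
      norm_num

/-- 5 = 13y² − x² has no rational solution; equivalently 5u² = 13v² − w²
has no nontrivial integral solution. -/
theorem stmt_15 :
    (¬ ∃ x y : ℚ, (5 : ℚ) = 13 * y ^ 2 - x ^ 2) ∧
    (¬ ∃ u v w : ℤ, ¬(u = 0 ∧ v = 0 ∧ w = 0) ∧ 5 * u ^ 2 = 13 * v ^ 2 - w ^ 2) := by
  constructor
  · rintro ⟨x, y, hxy⟩
    set u : ℤ := (x.den : ℤ) * (y.den : ℤ) with hu
    set v : ℤ := y.num * (x.den : ℤ) with hv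
    set w : ℤ := x.num * (y.den : ℤ) with hw
    have hdx : ((x.den : ℚ)) ≠ 0 := ne_of_gt (by exact_mod_cast x.pos)
    have hdy : ((y.den : ℚ)) ≠ 0 := ne_of_gt (by exact_mod_cast y.pos)
    have hxnum : (x.num : ℚ) = x * (x.den : ℚ) := by
      have := Rat.num_div_den x
      rw [div_eq_iff hdx] at this; exact this
    have hynum : (y.num : ℚ) = y * (y.den : ℚ) := by
      have := Rat.num_div_den y
      rw [div_eq_iff hdy] at this; exact this
    have hq : ((5 * u ^ 2 : ℤ) : ℚ) = ((13 * v ^ 2 - w ^ 2 : ℤ) : ℚ) := by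
      push_cast [hu, hv, hw]
      rw [hxnum, hynum]
      linear_combination ((x.den : ℚ) * (y.den : ℚ)) ^ 2 * hxy
    have hZ : 5 * u ^ 2 = 13 * v ^ 2 - w ^ 2 := by exact_mod_cast hq
    have := (descent (u.natAbs + v.natAbs + w.natAbs) u v w rfl hZ).1
    have hu0 : u ≠ 0 := by
      simp [hu, x.den_ne_zero, y.den_ne_zero]
    exact hu0 this
  · rintro ⟨u, v, w, hne, h⟩
    exact hne (descent (u.natAbs + v.natAbs + w.natAbs) u v w rfl h)
end

section
/- Let G be the Klein four-group with generators σ₁, σ₂ and M a multiplicatively-written F₂[G]-module. Suppose elements b, c, γ₁, γ₂, γ₃ ∈ M satisfy γ₁^{1+σ₂} = 1, γ₁^{1+σ₁} = b, γ₂^{1+σ₂} = b, γ₂^{1+σ₁} = c, γ₃^{1+σ₂} = c, γ₃^{1+σ₁} = 1, and suppose b, c are F₂-linearly independent in M. Then the submodule generated by γ₁, γ₂, γ₃ has F₂-dimension 5 (and is isomorphic to the indecomposable module Ω² of dimension 5). -/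
/-- If b, c, γ₁, γ₂, γ₃ satisfy the Ω² relations and b, c are F₂-linearly
independent, then the submodule generated by γ₁, γ₂, γ₃ has dimension 5,
i.e. {γ₁, γ₂, γ₃, b, c} is linearly independent over F₂. -/
theorem stmt_17 (W : Type*) [AddCommGroup W] [Module (ZMod 2) W]
    (σ1 σ2 : W →ₗ[ZMod 2] W)
    (hσ1 : ∀ x, σ1 (σ1 x) = x) (hσ2 : ∀ x, σ2 (σ2 x) = x)
    (hcomm : ∀ x, σ1 (σ2 x) = σ2 (σ1 x))
    (b c γ1 γ2 γ3 : W)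
    (h1 : σ2 γ1 = γ1) (h2 : σ1 γ1 = γ1 + b)
    (h3 : σ2 γ2 = γ2 + b) (h4 : σ1 γ2 = γ2 + c)
    (h5 : σ2 γ3 = γ3 + c) (h6 : σ1 γ3 = γ3)
    (hbc : LinearIndependent (ZMod 2) ![b, c]) :
    LinearIndependent (ZMod 2) ![γ1, γ2, γ3, b, c] := by
  have hchar : ∀ x : W, x + x = 0 := by
    intro x
    have h : (2 : ZMod 2) • x = 0 := by
      rw [show (2 : ZMod 2) = 0 from rfl, zero_smul]
    rwa [two_smul] at h
  have hneg : ∀ x : W, -x = x := by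
    intro x
    rw [neg_eq_iff_add_eq_zero, hchar]
  -- σ1 and σ2 fix b and c
  have hb1 : σ1 b = b := by
    have h := hσ1 γ1
    rw [h2, map_add, h2] at h
    have : σ1 b = -b := by
      have := h
      abel_nf at this ⊢
      linear_combination (norm := abel) this
    rw [this, hneg]
  have hc1 : σ1 c = c := by
    have h := hσ1 γ2
    rw [h4, map_add, h4] at h
    have : σ1 c = -c := by
      linear_combination (norm := abel) h
    rw [this, hneg]
  have hb2 : σ2 b = b := by
    have h := hσ2 γ2
    rw [h3, map_add, h3] at h
    have : σ2 b = -b := by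
      linear_combination (norm := abel) h
    rw [this, hneg]
  have hc2 : σ2 c = c := by
    have h := hσ2 γ3
    rw [h5, map_add, h5] at h
    have : σ2 c = -c := by
      linear_combination (norm := abel) h
    rw [this, hneg]
  rw [Fintype.linearIndependent_iff] at hbc ⊢
  intro g hg
  simp only [Fin.sum_univ_five, Matrix.cons_val_zero, Matrix.cons_val_one,
    Matrix.head_cons, Matrix.cons_val_two, Matrix.tail_cons, Matrix.cons_val_three,
    Matrix.cons_val_four, Matrix.head_fin_const] at hg
  -- apply σ1 to the relation
  have hA := congrArg σ1 hg
  simp only [map_add, map_smul, map_zero, h2, h4, h6, hb1, hc1] at hA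
  have e1 : g 0 • b + g 1 • c = 0 := by
    have e : (g 0 • (γ1 + b) + g 1 • (γ2 + c) + g 2 • γ3 + g 3 • b + g 4 • c)
        - (g 0 • γ1 + g 1 • γ2 + g 2 • γ3 + g 3 • b + g 4 • c) = 0 := by
      rw [hA, hg, sub_zero]
    calc g 0 • b + g 1 • c
        = (g 0 • (γ1 + b) + g 1 • (γ2 + c) + g 2 • γ3 + g 3 • b + g 4 • c)
          - (g 0 • γ1 + g 1 • γ2 + g 2 • γ3 + g 3 • b + g 4 • c) := by module
      _ = 0 := e
  have hB := congrArg σ2 hg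
  simp only [map_add, map_smul, map_zero, h1, h3, h5, hb2, hc2] at hB
  have e2 : g 1 • b + g 2 • c = 0 := by
    have e : (g 0 • γ1 + g 1 • (γ2 + b) + g 2 • (γ3 + c) + g 3 • b + g 4 • c)
        - (g 0 • γ1 + g 1 • γ2 + g 2 • γ3 + g 3 • b + g 4 • c) = 0 := by
      rw [hB, hg, sub_zero]
    calc g 1 • b + g 2 • c
        = (g 0 • γ1 + g 1 • (γ2 + b) + g 2 • (γ3 + c) + g 3 • b + g 4 • c)
          - (g 0 • γ1 + g 1 • γ2 + g 2 • γ3 + g 3 • b + g 4 • c) := by module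
      _ = 0 := e
  have hg01 := hbc ![g 0, g 1] (by
    simpa [Fin.sum_univ_two] using e1)
  have hg12 := hbc ![g 1, g 2] (by
    simpa [Fin.sum_univ_two] using e2)
  have h0 : g 0 = 0 := by simpa using hg01 0
  have hone : g 1 = 0 := by simpa using hg01 1
  have h2' : g 2 = 0 := by simpa using hg12 1
  have e3 : g 3 • b + g 4 • c = 0 := by
    rw [h0, hone, h2'] at hg
    simpa using hg
  have hg34 := hbc ![g 3, g 4] (by
    simpa [Fin.sum_univ_two] using e3)
  have h3' : g 3 = 0 := by simpa using hg34 0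
  have h4' : g 4 = 0 := by simpa using hg34 1
  intro i
  fin_cases i <;> simp [h0, hone, h2', h3', h4']
end
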